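/- Let N : ℕ be even with 0 < N, let c₁ : ℝ with k := 2·N·c₁ ∈ ℤ, and let f ∈ ℤ and ℓ ∈ {0,…,N−1}. Define F_N ∈ ℂ^{N×N} by [F_N]_{m,n} = (1/√N)·exp(-2πi·m·n/N), the diagonal chirp matrix Λ_{c₁} with [Λ_{c₁}]_{n,n} = exp(-2πi·c₁·n²), the diagonal Doppler matrix W^f with [W^f]_{n,n} = exp(-2πi·f·n/N), and the cyclic delay matrix L^ℓ with [L^ℓ]_{n,n'} = 1 if n' ≡ n − ℓ (mod N) and 0 otherwise. Then the single-path AFDM effective channel G = F_N·Λ_{c₁}·W^f·L^ℓ·Λ_{c₁}ᴴ·F_Nᴴ satisfies: [G]_{m,m'} ≠ 0 if and only if m' ≡ m + f + k·ℓ (mod N), and every nonzero entry of G has modulus 1; in particular each row and each column of G contains exactly one nonzero entry. -/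

import Mathlib

open Matrix Complex

/-- The `N`-point DFT matrix `F_N` with entries `(1/√N)·exp(-2πi·m·n/N)`. -/
noncomputable def dftMatrix (N : ℕ) : Matrix (Fin N) (Fin N) ℂ :=
  fun m n => (1 / Real.sqrt N : ℂ) *
    Complex.exp (-2 * Real.pi * Complex.I * (m : ℕ) * (n : ℕ) / N)

/-- The diagonal chirp matrix `Λ_c` with diagonal entries `exp(-2πi·c·n²)`. -/
noncomputable def chirpMatrix (N : ℕ) (c : ℝ) : Matrix (Fin N) (Fin N) ℂ :=
  Matrix.diagonal fun n => Complex.exp (-2 * Real.pi * Complex.I * c * (n : ℕ) ^ 2)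

/-- The diagonal Doppler matrix `W^f` with diagonal entries `exp(-2πi·f·n/N)`. -/
noncomputable def dopplerMatrix (N : ℕ) (f : ℤ) : Matrix (Fin N) (Fin N) ℂ :=
  Matrix.diagonal fun n => Complex.exp (-2 * Real.pi * Complex.I * (f : ℂ) * (n : ℕ) / N)

/-- The cyclic delay matrix `L^ℓ` with `[L^ℓ]_{n,n'} = 1` iff `n' ≡ n − ℓ (mod N)`. -/
def delayMatrix (N : ℕ) (ℓ : ℕ) : Matrix (Fin N) (Fin N) ℂ :=
  fun n n' => if Int.ModEq (N : ℤ) (n' : ℤ) ((n : ℤ) - (ℓ : ℤ)) then 1 else 0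

noncomputable def ee (x : ℝ) : ℂ := Complex.exp (2 * (Real.pi:ℂ) * Complex.I * (x:ℂ))

lemma ee_add (x y : ℝ) : ee (x + y) = ee x * ee y := by
  rw [ee, ee, ee, ← Complex.exp_add]; push_cast; ring_nf

lemma ee_int (z : ℤ) : ee (z:ℝ) = 1 := by
  rw [ee, ← Complex.exp_int_mul_two_pi_mul_I z]; congr 1; push_cast; ring

lemma ee_eq_of (x y : ℝ) (z : ℤ) (h : x = y + z) : ee x = ee y := by
  rw [h, ee_add, ee_int, mul_one]

lemma abs_ee (x : ℝ) : ‖ee x‖ = 1 := by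
  have h : (2 * (Real.pi:ℂ) * Complex.I * (x:ℂ)) = ((2*Real.pi*x : ℝ):ℂ) * Complex.I := by
    push_cast; ring
  rw [ee, h, Complex.norm_exp_ofReal_mul_I]

lemma ee_ne_zero (x : ℝ) : ee x ≠ 0 := Complex.exp_ne_zero _

lemma ee_conj (x : ℝ) : (starRingEnd ℂ) (ee x) = ee (-x) := by
  rw [ee, ee, ← Complex.exp_conj]; congr 1
  simp only [_root_.map_mul, Complex.conj_I, Complex.conj_ofReal, map_ofNat, Complex.ofReal_neg]
  ring

lemma ee_nat_mul (n : ℕ) (x : ℝ) : ee (n * x) = ee x ^ n := by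
  rw [ee, ee, ← Complex.exp_nat_mul]; congr 1; push_cast; ring

lemma sum_ee (N : ℕ) (hN : 0 < N) (d : ℤ) :
    ∑ n : Fin N, ee ((n : ℕ) * ((d : ℝ) / N)) = if (N:ℤ) ∣ d then (N:ℂ) else 0 := by
  have hNR : (N:ℝ) ≠ 0 := Nat.cast_ne_zero.2 hN.ne'
  simp_rw [ee_nat_mul]
  rw [Fin.sum_univ_eq_sum_range (fun i => ee ((d:ℝ)/N) ^ i)]
  by_cases h : (N:ℤ) ∣ d
  · obtain ⟨c, rfl⟩ := h
    have h2 : ((N*c : ℤ):ℝ)/N = ((c:ℤ):ℝ) := by push_cast; field_simp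
    rw [h2, ee_int]
    simp
  · have hzN : ee ((d:ℝ)/N) ^ N = 1 := by
      rw [← ee_nat_mul]
      have h3 : (N:ℝ) * ((d:ℝ)/N) = ((d:ℤ):ℝ) := by field_simp
      rw [h3, ee_int]
    have hz1 : ee ((d:ℝ)/N) ≠ 1 := by
      intro hcon
      rw [ee, Complex.exp_eq_one_iff] at hcon
      obtain ⟨z, hz⟩ := hcon
      apply h
      have h2 : (((d:ℝ)/N : ℝ):ℂ) = (z:ℂ) := by
        have h2πI : (2 * (Real.pi:ℂ) * Complex.I) ≠ 0 := by
          simp [Real.pi_ne_zero, Complex.I_ne_zero]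
        apply mul_left_cancel₀ h2πI
        rw [hz]; ring
      have h3 : (d:ℝ)/N = (z:ℝ) := by exact_mod_cast h2
      have h4 : (d:ℝ) = (N:ℝ) * z := by field_simp at h3; linarith
      exact ⟨z, by exact_mod_cast h4⟩
    rw [geom_sum_eq hz1, hzN]
    simp [h]

def finOfInt (N : ℕ) (hN : 0 < N) (r : ℤ) : Fin N :=
  ⟨(r % N).toNat, by
    have hNZ : (N:ℤ) ≠ 0 := by exact_mod_cast hN.ne'
    have h0 : 0 ≤ r % N := Int.emod_nonneg r hNZ
    have h1 : r % N < N := Int.emod_lt_of_pos r (by exact_mod_cast hN)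
    omega⟩

lemma finOfInt_modEq (N : ℕ) (hN : 0 < N) (r : ℤ) :
    Int.ModEq (N:ℤ) ((finOfInt N hN r : Fin N) : ℤ) r := by
  have hNZ : (N:ℤ) ≠ 0 := by exact_mod_cast hN.ne'
  have h0 : 0 ≤ r % N := Int.emod_nonneg r hNZ
  show (((r % N).toNat : ℤ)) % N = r % N
  rw [Int.toNat_of_nonneg h0, Int.emod_emod_of_dvd r dvd_rfl]

lemma fin_eq_of_modEq (N : ℕ) (a b : Fin N) (h : Int.ModEq (N:ℤ) (a:ℤ) (b:ℤ)) : a = b := by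
  have hd := h.dvd
  have h0 : (b:ℤ) - (a:ℤ) = 0 := by
    apply Int.eq_zero_of_abs_lt_dvd hd
    have ha' : (a:ℤ) < N := by exact_mod_cast a.isLt
    have hb' : (b:ℤ) < N := by exact_mod_cast b.isLt
    have ha0 : 0 ≤ (a:ℤ) := Int.ofNat_nonneg _
    have hb0 : 0 ≤ (b:ℤ) := Int.ofNat_nonneg _
    rw [abs_lt]; omega
  exact Fin.ext (by omega)

lemma modEq_iff_eq_finOfInt (N : ℕ) (hN : 0 < N) (a : Fin N) (r : ℤ) :
    Int.ModEq (N:ℤ) (a:ℤ) r ↔ a = finOfInt N hN r := by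
  constructor
  · intro h
    exact fin_eq_of_modEq N a _ (h.trans (finOfInt_modEq N hN r).symm)
  · rintro rfl
    exact finOfInt_modEq N hN r

lemma delay_apply (N : ℕ) (hN : 0 < N) (ℓ : ℕ) (n n' : Fin N) :
    delayMatrix N ℓ n n' = if n' = finOfInt N hN ((n:ℤ) - (ℓ:ℤ)) then 1 else 0 := by
  rw [delayMatrix]
  simp only [modEq_iff_eq_finOfInt N hN]

lemma dft_entry_ee (N : ℕ) (m n : Fin N) :
    dftMatrix N m n = (1 / Real.sqrt N : ℂ) * ee (-((m:ℕ) * (n:ℕ) / N : ℝ)) := by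
  rw [dftMatrix, ee]; congr 1; push_cast; ring

lemma chirp_entry_ee (N : ℕ) (c : ℝ) (n : Fin N) :
    Complex.exp (-2 * Real.pi * Complex.I * c * (n : ℕ) ^ 2) = ee (-(c * (n:ℕ)^2 : ℝ)) := by
  rw [ee]; congr 1; push_cast; ring

lemma doppler_entry_ee (N : ℕ) (f : ℤ) (n : Fin N) :
    Complex.exp (-2 * Real.pi * Complex.I * (f : ℂ) * (n : ℕ) / N) = ee (-((f:ℝ) * (n:ℕ) / N : ℝ)) := by
  rw [ee]; congr 1; push_cast; ring

lemma star_invsqrt (N : ℕ) : (starRingEnd ℂ) (1 / Real.sqrt N : ℂ) = (1 / Real.sqrt N : ℂ) := by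
  rw [map_div₀, _root_.map_one, Complex.conj_ofReal]

theorem entry_formula (N : ℕ) (hN : 0 < N) (hNeven : Even N)
    (c₁ : ℝ) (k : ℤ) (hk : (2 * N * c₁ : ℝ) = k) (f : ℤ) (ℓ : ℕ) (hℓ : ℓ < N)
    (m m' : Fin N) :
    (dftMatrix N * chirpMatrix N c₁ * dopplerMatrix N f * delayMatrix N ℓ *
        (chirpMatrix N c₁)ᴴ * (dftMatrix N)ᴴ) m m' =
    if (N:ℤ) ∣ ((m':ℤ) - (m:ℤ) - f - k * ℓ) then ee (c₁ * (ℓ:ℝ)^2 - (m':ℕ) * ℓ / N) else 0 := by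
  have hNR : (N:ℝ) ≠ 0 := Nat.cast_ne_zero.2 hN.ne'
  have hNC : (N:ℂ) ≠ 0 := Nat.cast_ne_zero.2 hN.ne'
  set d : ℤ := (m':ℤ) - (m:ℤ) - f - k * ℓ with hd
  set base : ℝ := c₁ * (ℓ:ℝ)^2 - (m':ℕ) * ℓ / N with hbase
  have expand : (dftMatrix N * chirpMatrix N c₁ * dopplerMatrix N f * delayMatrix N ℓ *
        (chirpMatrix N c₁)ᴴ * (dftMatrix N)ᴴ) m m' =
      ∑ n : Fin N, dftMatrix N m n * Complex.exp (-2 * Real.pi * Complex.I * c₁ * (n : ℕ) ^ 2)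
        * Complex.exp (-2 * Real.pi * Complex.I * (f : ℂ) * (n : ℕ) / N)
        * (starRingEnd ℂ) (Complex.exp (-2 * Real.pi * Complex.I * c₁ * ((finOfInt N hN ((n:ℤ) - (ℓ:ℤ)) : Fin N) : ℕ) ^ 2))
        * (starRingEnd ℂ) (dftMatrix N m' (finOfInt N hN ((n:ℤ) - (ℓ:ℤ)))) := by
    simp only [Matrix.mul_assoc]
    rw [Matrix.mul_apply]
    simp only [chirpMatrix, dopplerMatrix, Matrix.diagonal_conjTranspose, Matrix.diagonal_mul,
      Matrix.mul_apply, Matrix.conjTranspose_apply, delay_apply N hN, ite_mul, one_mul, zero_mul,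
      Finset.sum_ite_eq', Finset.mem_univ, if_true, Pi.star_apply, RCLike.star_def]
    apply Finset.sum_congr rfl
    intro n _
    simp only [Matrix.diagonal_apply, ite_mul, zero_mul, Finset.sum_ite_eq, Finset.sum_ite_eq',
      Finset.mem_univ, if_true, Pi.star_apply, RCLike.star_def]
    ring
  rw [expand]
  have hterm : ∀ n : Fin N,
      dftMatrix N m n * Complex.exp (-2 * Real.pi * Complex.I * c₁ * (n : ℕ) ^ 2)
        * Complex.exp (-2 * Real.pi * Complex.I * (f : ℂ) * (n : ℕ) / N)
        * (starRingEnd ℂ) (Complex.exp (-2 * Real.pi * Complex.I * c₁ * ((finOfInt N hN ((n:ℤ) - (ℓ:ℤ)) : Fin N) : ℕ) ^ 2))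
        * (starRingEnd ℂ) (dftMatrix N m' (finOfInt N hN ((n:ℤ) - (ℓ:ℤ))))
      = (1/(N:ℂ)) * (ee base * ee ((n:ℕ) * ((d:ℝ)/N))) := by
    intro n
    set σ : Fin N := finOfInt N hN ((n:ℤ) - (ℓ:ℤ)) with hσdef
    obtain ⟨t, ht⟩ : ∃ t : ℤ, (σ:ℤ) = (n:ℤ) - ℓ + N * t := by
      obtain ⟨c, hc⟩ := (finOfInt_modEq N hN ((n:ℤ) - (ℓ:ℤ))).dvd
      exact ⟨-c, by rw [mul_neg]; linarith⟩
    have hσR : ((σ:ℕ) : ℝ) = (n:ℕ) - (ℓ:ℕ) + N * t := by exact_mod_cast ht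
    rw [dft_entry_ee, dft_entry_ee, chirp_entry_ee, doppler_entry_ee, chirp_entry_ee,
      _root_.map_mul, star_invsqrt, ee_conj, ee_conj, neg_neg, neg_neg]
    have hss : (1 / Real.sqrt N : ℂ) * (1 / Real.sqrt N : ℂ) = 1/(N:ℂ) := by
      rw [div_mul_div_comm, one_mul]
      congr 1
      rw [← Complex.ofReal_mul, Real.mul_self_sqrt (Nat.cast_nonneg N)]
      norm_cast
    calc (1 / Real.sqrt N : ℂ) * ee (-((m:ℕ) * (n:ℕ) / N : ℝ)) * ee (-(c₁ * (n:ℕ)^2 : ℝ))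
          * ee (-((f:ℝ) * (n:ℕ) / N : ℝ)) * ee (c₁ * (σ:ℕ)^2 : ℝ)
          * ((1 / Real.sqrt N : ℂ) * ee ((m':ℕ) * (σ:ℕ) / N : ℝ))
        = ((1 / Real.sqrt N : ℂ) * (1 / Real.sqrt N : ℂ)) *
          ee ((-((m:ℕ) * (n:ℕ) / N : ℝ)) + ((-(c₁ * (n:ℕ)^2 : ℝ)) + ((-((f:ℝ) * (n:ℕ) / N : ℝ)) +
            ((c₁ * (σ:ℕ)^2 : ℝ) + ((m':ℕ) * (σ:ℕ) / N : ℝ))))) := by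
          rw [ee_add, ee_add, ee_add, ee_add]; ring
      _ = (1/(N:ℂ)) * (ee base * ee ((n:ℕ) * ((d:ℝ)/N))) := by
          rw [hss, ← ee_add]
          congr 1
          apply ee_eq_of _ _ (k * t * ((n:ℤ) - ℓ) + k * ((N:ℤ)/2) * t^2 + (m':ℤ) * t)
          obtain ⟨M, hM⟩ := hNeven
          have h2M : (N:ℝ) = 2 * M := by rw [hM]; push_cast; ring
          have hM2 : ((N:ℤ)/2 : ℤ) = (M:ℤ) := by omega
          have hMne : (M:ℝ) ≠ 0 := by
            intro h0
            rw [h2M, h0, mul_zero] at hNR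
            exact hNR rfl
          have hc₁ : c₁ = (k:ℝ)/(2*N) := by
            field_simp
            linarith [hk]
          rw [hbase, hd, hσR, hc₁, hM2]
          push_cast
          rw [h2M]
          field_simp
          ring
  rw [Finset.sum_congr rfl (fun n _ => hterm n), ← Finset.mul_sum, ← Finset.mul_sum,
    sum_ee N hN d]
  split
  · field_simp
  · simp

/-- **Single-path AFDM effective channel structure**: for even `N` and `k = 2Nc₁ ∈ ℤ`,
the single-path effective channel `G = F_N·Λ_{c₁}·W^f·L^ℓ·Λ_{c₁}ᴴ·F_Nᴴ` has
`[G]_{m,m'} ≠ 0` iff `m' ≡ m + f + k·ℓ (mod N)`, every nonzero entry has modulus `1`,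
and each row and each column contains exactly one nonzero entry. -/
theorem afdm_single_path_effective_channel (N : ℕ) (hN : 0 < N) (hNeven : Even N)
    (c₁ : ℝ) (k : ℤ) (hk : (2 * N * c₁ : ℝ) = k) (f : ℤ) (ℓ : ℕ) (hℓ : ℓ < N) :
    let G : Matrix (Fin N) (Fin N) ℂ :=
      dftMatrix N * chirpMatrix N c₁ * dopplerMatrix N f * delayMatrix N ℓ *
        (chirpMatrix N c₁)ᴴ * (dftMatrix N)ᴴ
    (∀ m m' : Fin N,
      G m m' ≠ 0 ↔ Int.ModEq (N : ℤ) (m' : ℤ) ((m : ℤ) + f + k * ℓ)) ∧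
    (∀ m m' : Fin N, G m m' ≠ 0 → ‖G m m'‖ = 1) ∧
    (∀ m : Fin N, ∃! m' : Fin N, G m m' ≠ 0) ∧
    (∀ m' : Fin N, ∃! m : Fin N, G m m' ≠ 0) := by
  intro G
  have key : ∀ m m' : Fin N, G m m' =
      if (N:ℤ) ∣ ((m':ℤ) - (m:ℤ) - f - k * ℓ) then ee (c₁ * (ℓ:ℝ)^2 - (m':ℕ) * ℓ / N) else 0 :=
    fun m m' => entry_formula N hN hNeven c₁ k hk f ℓ hℓ m m'
  have hiff : ∀ m m' : Fin N,
      ((N:ℤ) ∣ ((m':ℤ) - (m:ℤ) - f - k * ℓ)) ↔ Int.ModEq (N:ℤ) (m':ℤ) ((m:ℤ) + f + k * ℓ) := by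
    intro m m'
    rw [Int.modEq_iff_dvd]
    have h : ((m:ℤ) + f + k * ℓ - m') = -((m':ℤ) - m - f - k * ℓ) := by ring
    rw [h, dvd_neg]
  have h1 : ∀ m m' : Fin N, G m m' ≠ 0 ↔ Int.ModEq (N:ℤ) (m':ℤ) ((m:ℤ) + f + k * ℓ) := by
    intro m m'
    rw [key, ← hiff]
    by_cases h : (N:ℤ) ∣ ((m':ℤ) - (m:ℤ) - f - k * ℓ)
    · simp only [h, if_true]
      simp [ee_ne_zero]
    · simp [h]
  refine ⟨h1, ?_, ?_, ?_⟩
  · intro m m' hne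
    rw [key] at hne ⊢
    by_cases h : (N:ℤ) ∣ ((m':ℤ) - (m:ℤ) - f - k * ℓ)
    · simp only [h, if_true]
      exact abs_ee _
    · simp [h] at hne
  · intro m
    refine ⟨finOfInt N hN ((m:ℤ) + f + k * ℓ), ?_, ?_⟩
    · show G m (finOfInt N hN ((m:ℤ) + f + k * ℓ)) ≠ 0
      rw [h1]
      exact finOfInt_modEq N hN _
    · intro y hy
      have hy' : G m y ≠ 0 := hy
      rw [h1] at hy'
      exact (modEq_iff_eq_finOfInt N hN y _).1 hy'
  · intro m'
    have flip : ∀ m : Fin N,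
        Int.ModEq (N:ℤ) (m':ℤ) ((m:ℤ) + f + k * ℓ) ↔
        Int.ModEq (N:ℤ) (m:ℤ) ((m':ℤ) - f - k * ℓ) := by
      intro m
      rw [Int.modEq_iff_dvd, Int.modEq_iff_dvd]
      have h : ((m':ℤ) - f - k * ℓ - m) = -((m:ℤ) + f + k * ℓ - m') := by ring
      rw [h, dvd_neg]
    refine ⟨finOfInt N hN ((m':ℤ) - f - k * ℓ), ?_, ?_⟩
    · show G (finOfInt N hN ((m':ℤ) - f - k * ℓ)) m' ≠ 0
      rw [h1, flip]
      exact finOfInt_modEq N hN _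
    · intro y hy
      have hy' : G y m' ≠ 0 := hy
      rw [h1, flip] at hy'
      exact (modEq_iff_eq_finOfInt N hN y _).1 hy'
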